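/- Let φ : E(𝒜) → E(ℬ) be a sequential isomorphism between the effect sets of von Neumann algebras (a bijection with φ(A^{1/2} B A^{1/2}) = φ(A)^{1/2} φ(B) φ(A)^{1/2}). Then φ maps projections to projections, and for projections P, Q ∈ 𝒜: P ≤ Q ⟺ φ(P) ≤ φ(Q), and PQ = 0 ⟺ φ(P)φ(Q) = 0. In particular φ(0) = 0 and φ(1) = 1. -/

import Mathlib

set_option synthInstance.maxHeartbeats 1000000
set_option maxHeartbeats 1000000

/-- The effects of a von Neumann algebra `M`: elements `a` of `M` with `0 ≤ a ≤ 1`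
in the Loewner order. -/
def IsVNEffect {H : Type*} [NormedAddCommGroup H] [InnerProductSpace ℂ H] [CompleteSpace H]
    (M : VonNeumannAlgebra H) (a : H →L[ℂ] H) : Prop :=
  a ∈ M ∧ 0 ≤ a ∧ a ≤ 1

/-- A projection: a self-adjoint idempotent operator. -/
def IsProjOp {H : Type*} [NormedAddCommGroup H] [InnerProductSpace ℂ H] [CompleteSpace H]
    (p : H →L[ℂ] H) : Prop :=
  IsSelfAdjoint p ∧ p * p = p

section Aux

variable {H : Type*} [NormedAddCommGroup H] [InnerProductSpace ℂ H] [CompleteSpace H]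

lemma sqrt_of_projOp {p : H →L[ℂ] H} (hp : IsProjOp p) (h0 : 0 ≤ p) :
    CFC.sqrt p = p :=
  CFC.sqrt_unique hp.2 h0

lemma sqrt_conj_self (a : H →L[ℂ] H) (h0 : 0 ≤ a) :
    CFC.sqrt a * a * CFC.sqrt a = a * a := by
  have h : CFC.sqrt a * CFC.sqrt a = a := CFC.sqrt_mul_sqrt_self a h0
  calc CFC.sqrt a * a * CFC.sqrt a
      = CFC.sqrt a * (CFC.sqrt a * CFC.sqrt a) * CFC.sqrt a := by rw [h]
    _ = (CFC.sqrt a * CFC.sqrt a) * (CFC.sqrt a * CFC.sqrt a) := by noncomm_ring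
    _ = a * a := by rw [h]

lemma projOp_le_iff {p q : H →L[ℂ] H} (hp : IsProjOp p) (hq : IsProjOp q)
    (hp0 : 0 ≤ p) (hp1 : p ≤ 1) : p ≤ q ↔ q * p * q = p := by
  constructor
  · intro hle
    have hc : star (1 - q) = 1 - q := by
      rw [star_sub, star_one, hq.1]
    have h1 : (1 - q) * p * (1 - q) ≤ (1 - q) * q * (1 - q) := by
      have := star_left_conjugate_le_conjugate hle (1 - q); rwa [hc] at this
    have h2' : (1 - q) * q * (1 - q) = 0 := by
      rw [sub_mul, one_mul, hq.2, sub_self, zero_mul]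
    have h3 : 0 ≤ (1 - q) * p * (1 - q) := by
      have := star_left_conjugate_nonneg hp0 (1 - q); rwa [hc] at this
    have h4 : (1 - q) * p * (1 - q) = 0 := le_antisymm (h2' ▸ h1) h3
    have hss : CFC.sqrt p * CFC.sqrt p = p := CFC.sqrt_mul_sqrt_self p hp0
    have hsstar : star (CFC.sqrt p) = CFC.sqrt p :=
      IsSelfAdjoint.of_nonneg (CFC.sqrt_nonneg p)
    have h5 : star (CFC.sqrt p * (1 - q)) * (CFC.sqrt p * (1 - q)) = 0 := by
      rw [star_mul, hsstar, hc]
      calc (1 - q) * CFC.sqrt p * (CFC.sqrt p * (1 - q))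
          = (1 - q) * (CFC.sqrt p * CFC.sqrt p) * (1 - q) := by noncomm_ring
        _ = 0 := by rw [hss, h4]
    have h6 : CFC.sqrt p * (1 - q) = 0 := (CStarRing.star_mul_self_eq_zero_iff _).mp h5
    have h7 : p * (1 - q) = 0 := by
      rw [← hss, mul_assoc, h6, mul_zero]
    have h8 : p = p * q := by
      have : p * 1 - p * q = 0 := by rw [← mul_sub]; exact h7
      rw [mul_one] at this
      exact sub_eq_zero.mp this
    have h9 : q * p = p := by
      calc q * p = star (p * q) := by rw [star_mul, hq.1, hp.1]
        _ = star p := by rw [← h8]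
        _ = p := hp.1
    rw [mul_assoc, ← h8, h9]
  · intro h
    calc p = q * p * q := h.symm
      _ ≤ q * 1 * q := by
          have := star_left_conjugate_le_conjugate hp1 q; rwa [hq.1] at this
      _ = q := by rw [mul_one, hq.2]

lemma projOp_orth_iff {p q : H →L[ℂ] H} (hp : IsProjOp p) (hq : IsProjOp q)
    (hq0 : 0 ≤ q) : p * q = 0 ↔ p * q * p = 0 := by
  constructor
  · intro h; rw [h, zero_mul]
  · intro h
    have hss : CFC.sqrt q * CFC.sqrt q = q := CFC.sqrt_mul_sqrt_self q hq0
    have hsstar : star (CFC.sqrt q) = CFC.sqrt q :=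
      IsSelfAdjoint.of_nonneg (CFC.sqrt_nonneg q)
    have h5 : star (CFC.sqrt q * p) * (CFC.sqrt q * p) = 0 := by
      rw [star_mul, hsstar, hp.1]
      calc p * CFC.sqrt q * (CFC.sqrt q * p)
          = p * (CFC.sqrt q * CFC.sqrt q) * p := by noncomm_ring
        _ = 0 := by rw [hss]; exact h
    have h6 : CFC.sqrt q * p = 0 := (CStarRing.star_mul_self_eq_zero_iff _).mp h5
    have h7 : q * p = 0 := by rw [← hss, mul_assoc, h6, mul_zero]
    calc p * q = star (q * p) := by rw [star_mul, hq.1, hp.1]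
      _ = 0 := by rw [h7, star_zero]

lemma conj_effect {M : VonNeumannAlgebra H} {p q : H →L[ℂ] H}
    (hpE : IsVNEffect M p) (hqE : IsVNEffect M q) (hq : IsProjOp q) :
    IsVNEffect M (q * p * q) := by
  refine ⟨mul_mem (mul_mem hqE.1 hpE.1) hqE.1, ?_, ?_⟩
  · have := star_left_conjugate_nonneg hpE.2.1 q; rwa [hq.1] at this
  · calc q * p * q ≤ q * 1 * q := by
          have := star_left_conjugate_le_conjugate hpE.2.2 q; rwa [hq.1] at this
      _ = q := by rw [mul_one, hq.2]
      _ ≤ 1 := hqE.2.2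

end Aux

/-- A sequential isomorphism between von Neumann algebra effect sets maps projections to
projections and preserves order and orthogonality of projections in both directions;
in particular it fixes `0` and `1`. -/
theorem sequentialIso_projections
    {H K : Type*} [NormedAddCommGroup H] [InnerProductSpace ℂ H] [CompleteSpace H]
    [NormedAddCommGroup K] [InnerProductSpace ℂ K] [CompleteSpace K]
    (M : VonNeumannAlgebra H) (N : VonNeumannAlgebra K)
    (φ : {a : H →L[ℂ] H // IsVNEffect M a} → {b : K →L[ℂ] K // IsVNEffect N b})
    (hbij : Function.Bijective φ)
    (hseq : ∀ (a b : {a : H →L[ℂ] H // IsVNEffect M a})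
        (h : IsVNEffect M (CFC.sqrt (a : H →L[ℂ] H) * (b : H →L[ℂ] H) * CFC.sqrt (a : H →L[ℂ] H))),
      (φ ⟨CFC.sqrt (a : H →L[ℂ] H) * (b : H →L[ℂ] H) * CFC.sqrt (a : H →L[ℂ] H), h⟩ : K →L[ℂ] K)
        = CFC.sqrt (φ a : K →L[ℂ] K) * (φ b : K →L[ℂ] K) * CFC.sqrt (φ a : K →L[ℂ] K)) :
    (∀ p : {a : H →L[ℂ] H // IsVNEffect M a},
        IsProjOp (p : H →L[ℂ] H) → IsProjOp (φ p : K →L[ℂ] K)) ∧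
    (∀ p q : {a : H →L[ℂ] H // IsVNEffect M a},
        IsProjOp (p : H →L[ℂ] H) → IsProjOp (q : H →L[ℂ] H) →
        ((p : H →L[ℂ] H) ≤ (q : H →L[ℂ] H) ↔ (φ p : K →L[ℂ] K) ≤ (φ q : K →L[ℂ] K))) ∧
    (∀ p q : {a : H →L[ℂ] H // IsVNEffect M a},
        IsProjOp (p : H →L[ℂ] H) → IsProjOp (q : H →L[ℂ] H) →
        ((p : H →L[ℂ] H) * (q : H →L[ℂ] H) = 0 ↔
          (φ p : K →L[ℂ] K) * (φ q : K →L[ℂ] K) = 0)) ∧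
    (∀ h0 : IsVNEffect M 0, (φ ⟨0, h0⟩ : K →L[ℂ] K) = 0) ∧
    (∀ h1 : IsVNEffect M 1, (φ ⟨1, h1⟩ : K →L[ℂ] K) = 1) := by
  -- generalized form of `hseq` for rewritten sequential products
  have key : ∀ (a b : {a : H →L[ℂ] H // IsVNEffect M a}) (c : H →L[ℂ] H)
      (hc : IsVNEffect M c),
      CFC.sqrt (a : H →L[ℂ] H) * (b : H →L[ℂ] H) * CFC.sqrt (a : H →L[ℂ] H) = c →
      (φ ⟨c, hc⟩ : K →L[ℂ] K)
        = CFC.sqrt (φ a : K →L[ℂ] K) * (φ b : K →L[ℂ] K) * CFC.sqrt (φ a : K →L[ℂ] K) := by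
    intro a b c hc e
    subst e
    exact hseq a b hc
  -- Part 1: projections map to projections
  have hproj : ∀ p : {a : H →L[ℂ] H // IsVNEffect M a},
      IsProjOp (p : H →L[ℂ] H) → IsProjOp (φ p : K →L[ℂ] K) := by
    intro p hp
    have hsq : CFC.sqrt (p : H →L[ℂ] H) = (p : H →L[ℂ] H) := sqrt_of_projOp hp p.2.2.1
    have e : CFC.sqrt (p : H →L[ℂ] H) * (p : H →L[ℂ] H) * CFC.sqrt (p : H →L[ℂ] H)
        = (p : H →L[ℂ] H) := by rw [hsq, hp.2, hp.2]
    have h1 := key p p (p : H →L[ℂ] H) p.2 e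
    have h2 : (φ p : K →L[ℂ] K) = (φ p : K →L[ℂ] K) * (φ p : K →L[ℂ] K) := by
      rw [← sqrt_conj_self (φ p : K →L[ℂ] K) (φ p).2.2.1, ← h1]
    exact ⟨IsSelfAdjoint.of_nonneg (φ p).2.2.1, h2.symm⟩
  -- Part 4: φ 0 = 0
  have hzero : ∀ h0 : IsVNEffect M 0, (φ ⟨0, h0⟩ : K →L[ℂ] K) = 0 := by
    intro h0
    set z : {a : H →L[ℂ] H // IsVNEffect M a} := ⟨0, h0⟩ with hz
    have hzp : IsProjOp (z : H →L[ℂ] H) := ⟨IsSelfAdjoint.zero (H →L[ℂ] H), by simp [hz]⟩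
    have hφz : IsProjOp (φ z : K →L[ℂ] K) := hproj z hzp
    -- pick preimage of 1 - φ z
    have hdE : IsVNEffect N (1 - (φ z : K →L[ℂ] K)) := by
      refine ⟨sub_mem (one_mem N) (φ z).2.1, ?_, ?_⟩
      · rw [sub_nonneg]; exact (φ z).2.2.2
      · have := (φ z).2.2.1; simp only [sub_le_self_iff]; exact this
    obtain ⟨b, hb⟩ := hbij.2 ⟨1 - (φ z : K →L[ℂ] K), hdE⟩
    have e : CFC.sqrt (z : H →L[ℂ] H) * (b : H →L[ℂ] H) * CFC.sqrt (z : H →L[ℂ] H)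
        = (z : H →L[ℂ] H) := by simp [hz]
    have h1 := key z b (z : H →L[ℂ] H) z.2 e
    have hbv : (φ b : K →L[ℂ] K) = 1 - (φ z : K →L[ℂ] K) := by rw [hb]
    have hsq : CFC.sqrt (φ z : K →L[ℂ] K) = (φ z : K →L[ℂ] K) :=
      sqrt_of_projOp hφz (φ z).2.2.1
    rw [hsq, hbv] at h1
    have h2 : (φ z : K →L[ℂ] K) * (1 - (φ z : K →L[ℂ] K)) * (φ z : K →L[ℂ] K) = 0 := by
      rw [mul_sub, mul_one, hφz.2, sub_self, zero_mul]
    rw [h2] at h1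
    exact h1
  -- helper: zero is an effect
  have h0M : IsVNEffect M 0 := ⟨zero_mem M, le_refl 0, zero_le_one⟩
  refine ⟨hproj, ?_, ?_, hzero, ?_⟩
  · -- Part 2: order
    intro p q hp hq
    have hφp := hproj p hp
    have hφq := hproj q hq
    have hsqq : CFC.sqrt (q : H →L[ℂ] H) = (q : H →L[ℂ] H) := sqrt_of_projOp hq q.2.2.1
    have hsqφq : CFC.sqrt (φ q : K →L[ℂ] K) = (φ q : K →L[ℂ] K) :=
      sqrt_of_projOp hφq (φ q).2.2.1
    constructor
    · intro hle
      have hchar : (q : H →L[ℂ] H) * (p : H →L[ℂ] H) * (q : H →L[ℂ] H) = (p : H →L[ℂ] H) :=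
        (projOp_le_iff hp hq p.2.2.1 p.2.2.2).mp hle
      have e : CFC.sqrt (q : H →L[ℂ] H) * (p : H →L[ℂ] H) * CFC.sqrt (q : H →L[ℂ] H)
          = (p : H →L[ℂ] H) := by rw [hsqq]; exact hchar
      have h1 := key q p (p : H →L[ℂ] H) p.2 e
      rw [hsqφq] at h1
      exact (projOp_le_iff hφp hφq (φ p).2.2.1 (φ p).2.2.2).mpr h1.symm
    · intro hle
      have hchar : (φ q : K →L[ℂ] K) * (φ p : K →L[ℂ] K) * (φ q : K →L[ℂ] K)
          = (φ p : K →L[ℂ] K) :=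
        (projOp_le_iff hφp hφq (φ p).2.2.1 (φ p).2.2.2).mp hle
      have hE : IsVNEffect M ((q : H →L[ℂ] H) * (p : H →L[ℂ] H) * (q : H →L[ℂ] H)) :=
        conj_effect p.2 q.2 hq
      have e : CFC.sqrt (q : H →L[ℂ] H) * (p : H →L[ℂ] H) * CFC.sqrt (q : H →L[ℂ] H)
          = (q : H →L[ℂ] H) * (p : H →L[ℂ] H) * (q : H →L[ℂ] H) := by rw [hsqq]
      have h1 := key q p _ hE e
      rw [hsqφq, hchar] at h1
      have h2 : φ ⟨(q : H →L[ℂ] H) * (p : H →L[ℂ] H) * (q : H →L[ℂ] H), hE⟩ = φ p :=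
        Subtype.ext h1
      have h3 := hbij.1 h2
      have h4 : (q : H →L[ℂ] H) * (p : H →L[ℂ] H) * (q : H →L[ℂ] H) = (p : H →L[ℂ] H) :=
        congrArg Subtype.val h3
      exact (projOp_le_iff hp hq p.2.2.1 p.2.2.2).mpr h4
  · -- Part 3: orthogonality
    intro p q hp hq
    have hφp := hproj p hp
    have hφq := hproj q hq
    have hsqp : CFC.sqrt (p : H →L[ℂ] H) = (p : H →L[ℂ] H) := sqrt_of_projOp hp p.2.2.1
    have hsqφp : CFC.sqrt (φ p : K →L[ℂ] K) = (φ p : K →L[ℂ] K) :=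
      sqrt_of_projOp hφp (φ p).2.2.1
    constructor
    · intro horth
      have hchar : (p : H →L[ℂ] H) * (q : H →L[ℂ] H) * (p : H →L[ℂ] H) = 0 :=
        (projOp_orth_iff hp hq q.2.2.1).mp horth
      have e : CFC.sqrt (p : H →L[ℂ] H) * (q : H →L[ℂ] H) * CFC.sqrt (p : H →L[ℂ] H)
          = (0 : H →L[ℂ] H) := by rw [hsqp]; exact hchar
      have h1 := key p q 0 h0M e
      rw [hsqφp, hzero h0M] at h1
      exact (projOp_orth_iff hφp hφq (φ q).2.2.1).mpr h1.symm
    · intro horth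
      have hchar : (φ p : K →L[ℂ] K) * (φ q : K →L[ℂ] K) * (φ p : K →L[ℂ] K) = 0 :=
        (projOp_orth_iff hφp hφq (φ q).2.2.1).mp horth
      have hE : IsVNEffect M ((p : H →L[ℂ] H) * (q : H →L[ℂ] H) * (p : H →L[ℂ] H)) :=
        conj_effect q.2 p.2 hp
      have e : CFC.sqrt (p : H →L[ℂ] H) * (q : H →L[ℂ] H) * CFC.sqrt (p : H →L[ℂ] H)
          = (p : H →L[ℂ] H) * (q : H →L[ℂ] H) * (p : H →L[ℂ] H) := by rw [hsqp]
      have h1 := key p q _ hE e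
      rw [hsqφp, hchar] at h1
      have h2 : φ ⟨(p : H →L[ℂ] H) * (q : H →L[ℂ] H) * (p : H →L[ℂ] H), hE⟩ = φ ⟨0, h0M⟩ :=
        Subtype.ext (by rw [h1, hzero h0M])
      have h3 := hbij.1 h2
      have h4 : (p : H →L[ℂ] H) * (q : H →L[ℂ] H) * (p : H →L[ℂ] H) = 0 :=
        congrArg Subtype.val h3
      exact (projOp_orth_iff hp hq q.2.2.1).mpr h4
  · -- Part 5: φ 1 = 1
    intro h1
    set o : {a : H →L[ℂ] H // IsVNEffect M a} := ⟨1, h1⟩ with ho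
    have hop : IsProjOp (o : H →L[ℂ] H) := ⟨IsSelfAdjoint.one (H →L[ℂ] H), by simp [ho]⟩
    have hφo : IsProjOp (φ o : K →L[ℂ] K) := hproj o hop
    have hsq : CFC.sqrt (φ o : K →L[ℂ] K) = (φ o : K →L[ℂ] K) :=
      sqrt_of_projOp hφo (φ o).2.2.1
    have h1E : IsVNEffect N 1 := ⟨one_mem N, zero_le_one, le_refl 1⟩
    obtain ⟨b, hb⟩ := hbij.2 ⟨1, h1E⟩
    have e : CFC.sqrt (o : H →L[ℂ] H) * (b : H →L[ℂ] H) * CFC.sqrt (o : H →L[ℂ] H)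
        = (b : H →L[ℂ] H) := by simp [ho, CFC.sqrt_one]
    have hk := key o b (b : H →L[ℂ] H) b.2 e
    have hbv : (φ b : K →L[ℂ] K) = 1 := by rw [hb]
    rw [hsq, hbv] at hk
    -- hk : 1 = φ o * 1 * φ o
    rw [mul_one, hφo.2] at hk
    exact hk.symm
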